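/- For all n ≥ 0 and r ≥ 1, E_n(x) = (1/2^r)·Σ_{k=0}^{n} C(n,k)·(Σ_{l=0}^{r} C(r,l)·E_{n-k}(l))·E_k^{(r)}(x), expressing the ordinary Euler polynomial in the basis of order-r Euler polynomials. -/

import Mathlib

open Polynomial Finset Nat

/-- Euler polynomials `E_n(x)`, defined over `ℚ` by the recurrence
`E_n(x) = x^n - (1/2) ∑_{k<n} C(n,k) E_k(x)`, equivalent to the
generating function `(2/(e^t+1)) e^{xt} = ∑ E_n(x) t^n/n!`. -/
noncomputable def eulerPoly : ℕ → ℚ[X]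
  | n => X ^ n - Polynomial.C (1/2 : ℚ) *
      ∑ k : Fin n, Polynomial.C (n.choose k : ℚ) * eulerPoly k

/-- Euler polynomials of order `r`, `E_n^{(r)}(x)`, with generating function
`(2/(e^t+1))^r e^{xt}`; defined by Cauchy-product recursion on `r`, using the
Euler numbers `E_k = E_k(0)`. -/
noncomputable def eulerPolyOrder : ℕ → ℕ → ℚ[X]
  | 0, n => X ^ n
  | r+1, n => ∑ k ∈ Finset.range (n+1),
      Polynomial.C ((n.choose k : ℚ) * (eulerPoly k).eval 0) * eulerPolyOrder r (n-k)

lemma eulerPoly_def (n : ℕ) : eulerPoly n = X ^ n - Polynomial.C (1/2 : ℚ) *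
      ∑ k ∈ Finset.range n, Polynomial.C (n.choose k : ℚ) * eulerPoly k := by
  rw [eulerPoly]
  rw [Fin.sum_univ_eq_sum_range (fun k => Polynomial.C (n.choose k : ℚ) * eulerPoly k) n]

lemma eulerPolyOrder_zero (n : ℕ) : eulerPolyOrder 0 n = X ^ n := by rw [eulerPolyOrder]

lemma eulerPolyOrder_succ (r n : ℕ) : eulerPolyOrder (r+1) n = ∑ k ∈ Finset.range (n+1),
      Polynomial.C ((n.choose k : ℚ) * (eulerPoly k).eval 0) * eulerPolyOrder r (n-k) := by
  rw [eulerPolyOrder]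

/-- exponential generating function of a sequence of polynomials -/
noncomputable def egf (a : ℕ → ℚ[X]) : PowerSeries ℚ[X] :=
  PowerSeries.mk fun m => Polynomial.C (1/m ! : ℚ) * a m

lemma coeff_egf (a : ℕ → ℚ[X]) (n : ℕ) :
    PowerSeries.coeff (R := ℚ[X]) n (egf a) = Polynomial.C (1/n ! : ℚ) * a n :=
  PowerSeries.coeff_mk _ _

lemma inv_fact_eq (n k : ℕ) (h : k ≤ n) :
    (1/k ! : ℚ) * (1/(n-k)! : ℚ) = (1/n ! : ℚ) * (n.choose k : ℚ) := by
  rw [Nat.cast_choose ℚ h]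
  have h1 : (k ! : ℚ) ≠ 0 := Nat.cast_ne_zero.2 (Nat.factorial_ne_zero _)
  have h2 : ((n-k)! : ℚ) ≠ 0 := Nat.cast_ne_zero.2 (Nat.factorial_ne_zero _)
  have h3 : (n ! : ℚ) ≠ 0 := Nat.cast_ne_zero.2 (Nat.factorial_ne_zero _)
  field_simp

lemma egf_mul (a b : ℕ → ℚ[X]) (n : ℕ) :
    PowerSeries.coeff (R := ℚ[X]) n (egf a * egf b) =
      Polynomial.C (1/n ! : ℚ) *
        ∑ k ∈ Finset.range (n+1), Polynomial.C (n.choose k : ℚ) * (a k * b (n-k)) := by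
  rw [PowerSeries.coeff_mul, Finset.Nat.sum_antidiagonal_eq_sum_range_succ_mk,
    Finset.mul_sum]
  refine Finset.sum_congr rfl fun k hk => ?_
  have hkn : k ≤ n := Nat.lt_succ_iff.1 (Finset.mem_range.1 hk)
  simp only [coeff_egf]
  rw [show Polynomial.C (1/k ! : ℚ) * a k * (Polynomial.C (1/(n-k)! : ℚ) * b (n-k))
      = Polynomial.C ((1/k ! : ℚ) * (1/(n-k)! : ℚ)) * (a k * b (n-k)) by
    rw [map_mul]; ring]
  rw [inv_fact_eq n k hkn, map_mul]
  ring

noncomputable def E' : PowerSeries ℚ[X] := egf eulerPoly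
noncomputable def eX : PowerSeries ℚ[X] := egf fun n => X ^ n
noncomputable def fE : PowerSeries ℚ[X] := egf fun _ => 1
noncomputable def e0 : PowerSeries ℚ[X] := egf fun n => Polynomial.C ((eulerPoly n).eval 0)

/-- evaluation/constant substitution ring hom on power series -/
noncomputable def σ (a : ℚ) : PowerSeries ℚ[X] →+* PowerSeries ℚ[X] :=
  PowerSeries.map ((Polynomial.C : ℚ →+* ℚ[X]).comp (Polynomial.evalRingHom a))

lemma σ_egf (a : ℚ) (c : ℕ → ℚ[X]) :
    σ a (egf c) = egf fun n => Polynomial.C ((c n).eval a) := by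
  refine PowerSeries.ext fun n => ?_
  simp [σ, PowerSeries.coeff_map, coeff_egf]

lemma eulerPoly_rec (n : ℕ) :
    (∑ k ∈ Finset.range (n+1), Polynomial.C (n.choose k : ℚ) * eulerPoly k) + eulerPoly n
      = 2 * X ^ n := by
  have h := eulerPoly_def n
  have h2 : Polynomial.C (1/2 : ℚ) * ∑ k ∈ Finset.range n,
      Polynomial.C (n.choose k : ℚ) * eulerPoly k = X ^ n - eulerPoly n := by
    linear_combination h
  have hC : Polynomial.C (2:ℚ) * Polynomial.C (1/2:ℚ) = 1 := by rw [← map_mul]; norm_num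
  have h3 : (∑ k ∈ Finset.range n, Polynomial.C (n.choose k : ℚ) * eulerPoly k)
      = Polynomial.C (2:ℚ) * (X ^ n - eulerPoly n) := by
    rw [← h2, ← mul_assoc, hC, one_mul]
  rw [Finset.sum_range_succ, h3, Nat.choose_self, Nat.cast_one, map_one, one_mul]
  have hC2 : Polynomial.C (2:ℚ) = 2 := map_ofNat _ 2
  rw [hC2]; ring

lemma key1 : (fE + 1) * E' = 2 * eX := by
  refine PowerSeries.ext fun n => ?_
  rw [add_mul, one_mul, map_add, mul_comm fE E']
  rw [show E' * fE = egf eulerPoly * egf (fun _ => 1) from rfl, egf_mul]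
  rw [show E' = egf eulerPoly from rfl, coeff_egf]
  rw [show (2 : PowerSeries ℚ[X]) * eX = eX + eX by ring, map_add,
    show eX = egf (fun n => X ^ n) from rfl, coeff_egf]
  have := eulerPoly_rec n
  simp only [mul_one]
  calc Polynomial.C (1/n ! : ℚ) * (∑ k ∈ Finset.range (n+1),
          Polynomial.C (n.choose k : ℚ) * eulerPoly k) + Polynomial.C (1/n ! : ℚ) * eulerPoly n
      = Polynomial.C (1/n ! : ℚ) * ((∑ k ∈ Finset.range (n+1),
          Polynomial.C (n.choose k : ℚ) * eulerPoly k) + eulerPoly n) := by ring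
    _ = Polynomial.C (1/n ! : ℚ) * (2 * X ^ n) := by rw [eulerPoly_rec]
    _ = Polynomial.C (1/n ! : ℚ) * X ^ n + Polynomial.C (1/n ! : ℚ) * X ^ n := by ring

lemma σ_fE (a : ℚ) : σ a fE = fE := by
  rw [show fE = egf (fun _ => 1) from rfl, σ_egf]
  simp

lemma σ_E' (a : ℚ) : σ a E' = egf fun n => Polynomial.C ((eulerPoly n).eval a) := σ_egf a _

lemma σ_eX (a : ℚ) : σ a eX = egf fun n => Polynomial.C (a ^ n) := by
  rw [show eX = egf (fun n => X ^ n) from rfl, σ_egf]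
  simp

lemma key2 : (fE + 1) * e0 = 2 := by
  have h := congrArg (σ 0) key1
  rw [map_mul, map_add, map_one, σ_fE, map_mul, σ_eX] at h
  rw [show σ 0 E' = e0 from σ_egf 0 _, show σ 0 (2 : PowerSeries ℚ[X]) = 2 by rw [← one_add_one_eq_two, map_add, map_one]] at h
  rw [h]
  have : egf (fun n => Polynomial.C ((0:ℚ) ^ n)) = 1 := by
    ext n
    rw [coeff_egf]
    cases n with
    | zero => simp
    | succ m => simp
  rw [this, mul_one]

lemma fE_add_one_ne : (fE + 1 : PowerSeries ℚ[X]) ≠ 0 := by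
  intro h
  have := congrArg (PowerSeries.coeff (R := ℚ[X]) 0) h
  rw [show fE = egf (fun _ => 1) from rfl, map_add, coeff_egf, map_zero] at this
  simp at this

lemma key3 : E' = e0 * eX := by
  apply mul_left_cancel₀ fE_add_one_ne
  rw [key1, ← mul_assoc, key2]

noncomputable def Er (r : ℕ) : PowerSeries ℚ[X] := egf (eulerPolyOrder r)

lemma Er_zero : Er 0 = eX := by
  refine PowerSeries.ext fun n => ?_
  rw [show Er 0 = egf (eulerPolyOrder 0) from rfl, coeff_egf, eulerPolyOrder_zero,
    show eX = egf (fun n => X ^ n) from rfl, coeff_egf]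

lemma Er_succ (r : ℕ) : Er (r+1) = e0 * Er r := by
  refine PowerSeries.ext fun n => ?_
  rw [show Er (r+1) = egf (eulerPolyOrder (r+1)) from rfl, coeff_egf, eulerPolyOrder_succ,
    show e0 * Er r = egf (fun n => Polynomial.C ((eulerPoly n).eval 0)) * egf (eulerPolyOrder r)
      from rfl, egf_mul, Finset.mul_sum, Finset.mul_sum]
  refine Finset.sum_congr rfl fun k _ => ?_
  rw [map_mul]
  ring

lemma Er_eq (r : ℕ) : Er r = e0 ^ r * eX := by
  induction r with
  | zero => rw [pow_zero, one_mul, Er_zero]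
  | succ m ih => rw [Er_succ, ih, pow_succ]; ring

lemma fE_eq : fE = PowerSeries.map (Polynomial.C : ℚ →+* ℚ[X]) (PowerSeries.exp ℚ) := by
  refine PowerSeries.ext fun n => ?_
  rw [show fE = egf (fun _ => 1) from rfl, coeff_egf, PowerSeries.coeff_map,
    PowerSeries.coeff_exp]
  simp

lemma fE_pow (l : ℕ) : fE ^ l = egf fun n => Polynomial.C ((l : ℚ) ^ n) := by
  refine PowerSeries.ext fun n => ?_
  rw [fE_eq, ← map_pow, PowerSeries.exp_pow_eq_rescale_exp, PowerSeries.coeff_map,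
    PowerSeries.coeff_rescale, PowerSeries.coeff_exp, coeff_egf]
  push_cast
  rw [map_mul]
  ring

lemma σ_e0 (a : ℚ) : σ a e0 = e0 := by
  rw [show e0 = egf (fun n => Polynomial.C ((eulerPoly n).eval 0)) from rfl, σ_egf]
  simp

lemma key4 (l : ℕ) : σ (l : ℚ) E' = e0 * fE ^ l := by
  rw [key3, map_mul, σ_e0, σ_eX, fE_pow]

noncomputable def sS (r : ℕ) : PowerSeries ℚ[X] :=
  egf fun m => Polynomial.C (∑ l ∈ Finset.range (r+1),
    (r.choose l : ℚ) * (eulerPoly m).eval (l : ℚ))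

lemma sS_eq (r : ℕ) : sS r = ∑ l ∈ Finset.range (r+1),
    ((r.choose l : PowerSeries ℚ[X])) * σ (l : ℚ) E' := by
  refine PowerSeries.ext fun n => ?_
  rw [show sS r = egf (fun m => Polynomial.C (∑ l ∈ Finset.range (r+1),
    (r.choose l : ℚ) * (eulerPoly m).eval (l : ℚ))) from rfl, coeff_egf, map_sum, map_sum,
    Finset.mul_sum]
  refine Finset.sum_congr rfl fun l _ => ?_
  have hcast : ((r.choose l : ℕ) : PowerSeries ℚ[X]) =
      PowerSeries.C (R := ℚ[X]) (Polynomial.C (r.choose l : ℚ)) := by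
    simp [map_natCast]
  rw [σ_E', hcast, PowerSeries.coeff_C_mul, coeff_egf, map_mul]
  ring

lemma key5 (r : ℕ) : sS r = e0 * (fE + 1) ^ r := by
  have hpow : (fE + 1) ^ r = ∑ l ∈ Finset.range (r+1),
      fE ^ l * ((r.choose l : ℕ) : PowerSeries ℚ[X]) := by
    rw [add_pow]
    simp
  rw [sS_eq, hpow, Finset.mul_sum]
  refine Finset.sum_congr rfl fun l _ => ?_
  rw [key4]
  ring

lemma key6 (r : ℕ) : sS r * Er r = 2 ^ r * E' := by
  rw [key5, Er_eq, key3]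
  calc e0 * (fE + 1) ^ r * (e0 ^ r * eX)
      = ((fE + 1) * e0) ^ r * (e0 * eX) := by rw [mul_pow]; ring
    _ = 2 ^ r * (e0 * eX) := by rw [key2]

theorem euler_poly_in_order_r_basis (n r : ℕ) (hr : 1 ≤ r) :
    eulerPoly n =
      Polynomial.C ((1 : ℚ) / 2 ^ r) *
        ∑ k ∈ Finset.range (n + 1),
          Polynomial.C ((n.choose k : ℚ) *
              ∑ l ∈ Finset.range (r + 1),
                (r.choose l : ℚ) * (eulerPoly (n - k)).eval (l : ℚ)) *
            eulerPolyOrder r k := by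
  have h := congrArg (PowerSeries.coeff (R := ℚ[X]) n) (key6 r)
  rw [mul_comm (sS r) (Er r)] at h
  rw [show Er r * sS r = egf (eulerPolyOrder r) * egf (fun m => Polynomial.C
      (∑ l ∈ Finset.range (r+1), (r.choose l : ℚ) * (eulerPoly m).eval (l : ℚ))) from rfl,
    egf_mul] at h
  have h2 : ((2 : PowerSeries ℚ[X]) ^ r) = PowerSeries.C (R := ℚ[X]) (Polynomial.C ((2:ℚ) ^ r)) := by
    rw [map_pow, map_pow, map_ofNat, map_ofNat]
  rw [h2, PowerSeries.coeff_C_mul,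
    show E' = egf eulerPoly from rfl, coeff_egf] at h
  have hC : Polynomial.C (1/(n ! : ℚ)) ≠ 0 := by
    simp [Nat.factorial_ne_zero, Polynomial.C_eq_zero]
  have h3 : (∑ k ∈ Finset.range (n+1), Polynomial.C (n.choose k : ℚ) *
      (eulerPolyOrder r k * Polynomial.C (∑ l ∈ Finset.range (r+1),
        (r.choose l : ℚ) * (eulerPoly (n-k)).eval (l : ℚ))))
      = Polynomial.C ((2:ℚ) ^ r) * eulerPoly n := by
    apply mul_left_cancel₀ hC
    rw [h]
    ring
  have h4 : (∑ k ∈ Finset.range (n + 1),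
      Polynomial.C ((n.choose k : ℚ) * ∑ l ∈ Finset.range (r + 1),
        (r.choose l : ℚ) * (eulerPoly (n - k)).eval (l : ℚ)) * eulerPolyOrder r k)
      = Polynomial.C ((2:ℚ) ^ r) * eulerPoly n := by
    rw [← h3]
    refine Finset.sum_congr rfl fun k _ => ?_
    rw [map_mul]
    ring
  rw [h4, ← mul_assoc, ← map_mul]
  norm_num
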